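/- arXiv:2502.07523 — 2 statements merged into one kernel-verified Lean document; each statement's English description precedes it below -/
import Mathlib

section
/- Let g : ℝ → ℝ be positively homogeneous of degree 1 and differentiable, and let f(w) = γ·(g(x·w + b) − μ)/σ + β where μ and σ > 0 are treated as constants (not differentiated through, i.e., 'stop-gradient'). Then for every c > 0, the derivative with respect to w satisfies f'(c·w evaluated with bias c·b and statistics computed from the scaled parameters) = (1/c)·f'(w), i.e., the gradient of the batch-normalized output with respect to the weight scales inversely proportionally to the scaling factor c of the parameters. -/
/-- The gradient of a batch-normalized output with respect to the weight scales
inversely proportionally to the scaling factor `c` of the parameters.  Here the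
batch statistics `μ`, `σ` are treated as constants (stop-gradient), and under
scaling of the parameters by `c` they become `c*μ` and `c*σ`. -/
theorem bn_grad_inverse_scaling (g : ℝ → ℝ)
    (hg : ∀ c > (0 : ℝ), ∀ u : ℝ, g (c * u) = c * g u)
    (hgdiff : Differentiable ℝ g)
    (x b γ β μ σ : ℝ) (hσ : 0 < σ) (c : ℝ) (hc : 0 < c) (w : ℝ) :
    deriv (fun w' : ℝ => γ * (g (x * w' + c * b) - c * μ) / (c * σ) + β) (c * w)
      = (1 / c) * deriv (fun w' : ℝ => γ * (g (x * w' + b) - μ) / σ + β) w := by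
  set f : ℝ → ℝ := fun w' => γ * (g (x * w' + b) - μ) / σ + β with hf
  have hc0 : c ≠ 0 := ne_of_gt hc
  have hfun : (fun w' : ℝ => γ * (g (x * w' + c * b) - c * μ) / (c * σ) + β)
      = fun w' => f (w' / c) := by
    funext w'
    have h1 : x * w' + c * b = c * (x * (w' / c) + b) := by field_simp
    simp only [hf, h1, hg c hc]
    field_simp
  rw [hfun]
  have hfd : Differentiable ℝ f := by
    apply Differentiable.add _ (differentiable_const β)
    apply Differentiable.div_const
    apply Differentiable.const_mul
    apply Differentiable.sub _ (differentiable_const μ)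
    exact hgdiff.comp (by fun_prop)
  have h1 : HasDerivAt (fun y : ℝ => y / c) (1 / c) (c * w) := by
    simpa using (hasDerivAt_id (c * w)).div_const c
  have h2 : HasDerivAt f (deriv f w) (c * w / c) := by
    rw [show c * w / c = w by field_simp]
    exact (hfd w).hasDerivAt
  have := (h2.comp (c * w) h1).deriv
  rw [show (fun w' : ℝ => f (w' / c)) = f ∘ (fun y => y / c) from rfl, this]; ring
end

section
/- Let f : ℝⁿ → ℝ be differentiable and scale-invariant (f(c·w) = f(w) for c > 0). Consider a gradient step w' = w − η·∇f(w) with learning rate η > 0 and w ≠ 0. Then ‖w'‖² = ‖w‖² + η²·‖∇f(w)‖², so the parameter norm is non-decreasing under gradient descent, and strictly increasing whenever ∇f(w) ≠ 0. -/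
open scoped RealInnerProductSpace

/-- Under gradient descent on a scale-invariant function, the squared parameter
norm satisfies the Pythagorean identity, so it is non-decreasing and strictly
increasing whenever the gradient is nonzero. -/
theorem norm_increase_gradient_step {n : ℕ}
    (f : EuclideanSpace ℝ (Fin n) → ℝ) (hf : Differentiable ℝ f)
    (hsi : ∀ c > (0 : ℝ), ∀ w : EuclideanSpace ℝ (Fin n), w ≠ 0 → f (c • w) = f w)
    (η : ℝ) (hη : 0 < η) (w w' : EuclideanSpace ℝ (Fin n)) (hw : w ≠ 0)
    (hstep : w' = w - η • gradient f w) :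
    ‖w'‖ ^ 2 = ‖w‖ ^ 2 + η ^ 2 * ‖gradient f w‖ ^ 2 ∧
      ‖w‖ ≤ ‖w'‖ ∧ (gradient f w ≠ 0 → ‖w‖ < ‖w'‖) := by
  set g := gradient f w with hg
  -- orthogonality: ⟪g, w⟫ = 0
  have horth : ⟪g, w⟫ = 0 := by
    have hsmul : HasDerivAt (fun c : ℝ => c • w) w 1 := by
      simpa using (hasDerivAt_id (1:ℝ)).smul_const w
    have hcomp : HasDerivAt (fun c : ℝ => f (c • w)) (fderiv ℝ f w w) 1 := by
      have := ((hf ((1:ℝ) • w)).hasFDerivAt.comp_hasDerivAt 1 hsmul)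
      rw [one_smul] at this
      exact this
    have hconst : HasDerivAt (fun c : ℝ => f (c • w)) 0 1 := by
      have heq : (fun c : ℝ => f (c • w)) =ᶠ[nhds (1:ℝ)] fun _ => f w := by
        filter_upwards [Ioi_mem_nhds (show (0:ℝ) < 1 by norm_num)] with c hc
        exact hsi c hc w hw
      exact (hasDerivAt_const (1:ℝ) (f w)).congr_of_eventuallyEq heq
    have h0 : fderiv ℝ f w w = 0 := hcomp.unique hconst
    rw [hg, gradient, InnerProductSpace.toDual_symm_apply, h0]
  have hpy : ‖w'‖ ^ 2 = ‖w‖ ^ 2 + η ^ 2 * ‖g‖ ^ 2 := by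
    rw [hstep]
    rw [norm_sub_sq_real, inner_smul_right, real_inner_comm, horth, norm_smul]
    simp [mul_pow, abs_of_pos hη]
    try ring
  refine ⟨hpy, ?_, ?_⟩
  · have h2 : ‖w‖ ^ 2 ≤ ‖w'‖ ^ 2 := by nlinarith [sq_nonneg η, sq_nonneg ‖g‖]
    nlinarith [norm_nonneg w, norm_nonneg w']
  · intro hgne
    have h2 : ‖w‖ ^ 2 < ‖w'‖ ^ 2 := by
      have : 0 < ‖g‖ := norm_pos_iff.mpr hgne
      nlinarith [mul_pos (pow_pos hη 2) (pow_pos this 2)]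
    nlinarith [norm_nonneg w, norm_nonneg w']
end
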